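/- For γ = -1/2 and δ = 1, the Wright function satisfies W(-z; -1/2, 1) = erfc(z/2) for all real z, where erfc is the complementary error function. -/

import Mathlib

set_option maxHeartbeats 1000000

open Real MeasureTheory Set intervalIntegral

/-- The two-parameter Wright function with real parameters and argument
(with the convention `1/Γ = 0` at the poles, which is how `Real.Gamma`
vanishes at nonpositive integers). -/
noncomputable def wrightR (γ δ z : ℝ) : ℝ :=
  ∑' k : ℕ, z ^ k / ((k.factorial : ℝ) * Real.Gamma (γ * k + δ))

/-- The complementary error function `erfc(x) = (2/√π) ∫_x^∞ e^{-t²} dt`. -/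
noncomputable def erfc (x : ℝ) : ℝ :=
  (2 / Real.sqrt Real.pi) * ∫ t in Set.Ioi x, Real.exp (-t ^ 2)

lemma gamma_half_sub (m : ℕ) :
    Real.Gamma (1/2 - m) = Real.sqrt Real.pi * (-4)^m * m.factorial / (2*m).factorial := by
  induction m with
  | zero => norm_num [Real.Gamma_one_half_eq]
  | succ n ih =>
      have hx : (-(1:ℝ)/2 - n) ≠ 0 := by
        have : (0:ℝ) ≤ n := Nat.cast_nonneg n
        intro h; nlinarith
      have key := Real.Gamma_add_one hx
      rw [show (-(1:ℝ)/2 - n) + 1 = 1/2 - n by ring] at key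
      have hG : Real.Gamma (-(1:ℝ)/2 - n) = Real.Gamma (1/2 - n) / (-(1:ℝ)/2 - n) := by
        rw [eq_div_iff hx, mul_comm]; exact key.symm
      have hcast : (1/2 : ℝ) - ((n:ℕ)+1 : ℕ) = -(1:ℝ)/2 - n := by push_cast; ring
      rw [hcast, hG, ih]
      have e1 : ((2*(n+1)).factorial : ℝ) = (2*(n:ℝ)+2) * ((2*(n:ℝ)+1) * (2*n).factorial) := by
        rw [show 2*(n+1) = (2*n+1)+1 by ring, Nat.factorial_succ, Nat.factorial_succ]
        push_cast; ring
      have e2 : (((n:ℕ)+1).factorial : ℝ) = ((n:ℝ)+1) * n.factorial := by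
        rw [Nat.factorial_succ]; push_cast; ring
      have f1 : ((2*n).factorial : ℝ) ≠ 0 := Nat.cast_ne_zero.mpr (Nat.factorial_ne_zero _)
      have f2 : ((2*n).factorial : ℝ) > 0 := Nat.cast_pos.mpr (Nat.factorial_pos _)
      rw [e1, e2, div_div, div_eq_div_iff (mul_ne_zero f1 hx) (by positivity)]
      ring

lemma core_summable (x : ℝ) :
    Summable (fun m : ℕ => (-1)^m * x^(2*m+1) / (m.factorial * (2*m+1)) : ℕ → ℝ) := by
  apply Summable.of_norm
  apply Summable.of_nonneg_of_le (fun m => norm_nonneg _)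
    (f := fun m : ℕ => |x| * (x^2)^m / m.factorial)
  · intro m
    have hfac : (0:ℝ) < m.factorial := Nat.cast_pos.mpr (Nat.factorial_pos m)
    have h1 : ‖(-1:ℝ)^m * x^(2*m+1) / (m.factorial * (2*m+1))‖
        = |x|^(2*m+1) / (m.factorial * (2*m+1)) := by
      rw [Real.norm_eq_abs, abs_div, abs_mul, abs_pow, abs_neg, abs_one, one_pow, one_mul,
        abs_pow, abs_of_pos (show (0:ℝ) < m.factorial * (2*m+1) by positivity)]
    have h2 : |x|^(2*m+1) = |x| * (x^2)^m := by
      rw [pow_succ', pow_mul, sq_abs]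
    rw [h1, h2]
    gcongr
    nlinarith [(Nat.cast_nonneg m : (0:ℝ) ≤ m), hfac]
  · have := (Real.summable_pow_div_factorial (x^2)).mul_left |x|
    simpa [mul_div_assoc] using this

lemma exp_neg_sq_tsum (t : ℝ) :
    Real.exp (-t^2) = ∑' m : ℕ, (-1)^m * t^(2*m) / m.factorial := by
  rw [Real.exp_eq_exp_ℝ, NormedSpace.exp_eq_tsum_div]
  show (∑' m : ℕ, (-t^2)^m / m.factorial) = _
  exact tsum_congr fun m => by rw [neg_pow, pow_mul]

lemma gauss_series_nonneg {x : ℝ} (hx : 0 ≤ x) :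
    ∫ t in (0:ℝ)..x, Real.exp (-t^2)
      = ∑' m : ℕ, (-1)^m * x^(2*m+1) / (m.factorial * (2*m+1)) := by
  have hF_int : ∀ m : ℕ, Integrable (fun t : ℝ => (-1)^m * t^(2*m) / m.factorial)
      (volume.restrict (Ioc (0:ℝ) x)) := by
    intro m
    exact Continuous.integrableOn_Ioc ((continuous_const.mul (continuous_pow _)).div_const _)
  have hval : ∀ m : ℕ, (∫ t in Ioc (0:ℝ) x, (-1)^m * t^(2*m) / (m.factorial:ℝ))
      = (-1)^m * x^(2*m+1) / (m.factorial * (2*m+1)) := by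
    intro m
    have hfac : (0:ℝ) < m.factorial := Nat.cast_pos.mpr (Nat.factorial_pos m)
    rw [← integral_of_le hx]
    simp_rw [div_eq_mul_inv, mul_comm ((-1:ℝ)^m) _, mul_assoc]
    rw [intervalIntegral.integral_mul_const, integral_pow, zero_pow (by omega : 2*m+1 ≠ 0)]
    push_cast
    rw [sub_zero]
    simp only [div_eq_mul_inv, mul_inv]
    ring
  have hnorm : ∀ m : ℕ, (∫ t in Ioc (0:ℝ) x, ‖(-1)^m * t^(2*m) / (m.factorial:ℝ)‖)
      = x^(2*m+1) / (m.factorial * (2*m+1)) := by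
    intro m
    have hfac : (0:ℝ) < m.factorial := Nat.cast_pos.mpr (Nat.factorial_pos m)
    have habs : ∀ t : ℝ, ‖(-1)^m * t^(2*m) / (m.factorial:ℝ)‖ = t^(2*m) / m.factorial := by
      intro t
      have ht : (0:ℝ) ≤ t^(2*m) := by rw [pow_mul]; positivity
      rw [norm_div, norm_mul, norm_pow, norm_neg, norm_one, one_pow, one_mul,
        Real.norm_eq_abs, Real.norm_eq_abs, abs_of_nonneg ht, abs_of_pos hfac]
    simp_rw [habs, div_eq_mul_inv]
    rw [← integral_of_le hx, intervalIntegral.integral_mul_const, integral_pow, zero_pow (by omega : 2*m+1 ≠ 0)]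
    push_cast
    rw [sub_zero]
    simp only [div_eq_mul_inv, mul_inv]
    ring
  have hsum : Summable (fun m : ℕ => ∫ t in Ioc (0:ℝ) x, ‖(-1)^m * t^(2*m) / (m.factorial:ℝ)‖) := by
    simp_rw [hnorm]
    apply Summable.of_nonneg_of_le (fun m => by positivity)
      (f := fun m : ℕ => x * (x^2)^m / m.factorial)
    · intro m
      have hfac : (0:ℝ) < m.factorial := Nat.cast_pos.mpr (Nat.factorial_pos m)
      have h2 : x^(2*m+1) = x * (x^2)^m := by rw [pow_succ', pow_mul]
      rw [h2]
      gcongr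
      nlinarith [(Nat.cast_nonneg m : (0:ℝ) ≤ m), hfac]
    · have := (Real.summable_pow_div_factorial (x^2)).mul_left x
      simpa [mul_div_assoc] using this
  rw [integral_of_le hx]
  simp_rw [exp_neg_sq_tsum]
  rw [← MeasureTheory.integral_tsum_of_summable_integral_norm hF_int hsum]
  exact tsum_congr fun m => hval m

lemma gauss_series (x : ℝ) :
    ∫ t in (0:ℝ)..x, Real.exp (-t^2)
      = ∑' m : ℕ, (-1)^m * x^(2*m+1) / (m.factorial * (2*m+1)) := by
  rcases le_or_gt 0 x with hx | hx
  · exact gauss_series_nonneg hx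
  · have h := gauss_series_nonneg (x := -x) (by linarith)
    have heven : ∀ t : ℝ, Real.exp (-(-t)^2) = Real.exp (-t^2) := by
      intro t; rw [neg_pow]; norm_num
    have hflip : (∫ t in (0:ℝ)..x, Real.exp (-t^2))
        = - ∫ t in (0:ℝ)..(-x), Real.exp (-t^2) := by
      have h1 := integral_comp_neg (a := (0:ℝ)) (b := x) (f := fun s => Real.exp (-s^2))
      simp only [heven] at h1
      rw [h1, neg_zero, integral_symm]
    have hrhs : (∑' m : ℕ, (-1)^m * (-x)^(2*m+1) / (m.factorial * (2*m+1)) : ℝ)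
        = - ∑' m : ℕ, (-1)^m * x^(2*m+1) / (m.factorial * (2*m+1)) := by
      rw [← tsum_neg]
      exact tsum_congr fun m => by
        rw [Odd.neg_pow (odd_two_mul_add_one m)]
        simp only [div_eq_mul_inv, mul_inv]
        ring
    rw [hrhs] at h
    rw [hflip, h]
    ring

lemma erfc_eq (x : ℝ) :
    erfc x = 1 - (2 / Real.sqrt Real.pi)
      * ∑' m : ℕ, (-1)^m * x^(2*m+1) / (m.factorial * (2*m+1)) := by
  have hint : Integrable (fun t : ℝ => Real.exp (-t^2)) := by
    have := integrable_exp_neg_mul_sq (b := 1) one_pos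
    simpa using this
  have h1 : ∫ t in Ioi (0:ℝ), Real.exp (-t^2) = Real.sqrt Real.pi / 2 := by
    have := integral_gaussian_Ioi 1
    simpa using this
  have hI0 := integral_Iic_add_Ioi (b := (0:ℝ)) hint.integrableOn hint.integrableOn
    (f := fun t : ℝ => Real.exp (-t^2)) (μ := volume)
  have hIx := integral_Iic_add_Ioi (b := x) hint.integrableOn hint.integrableOn
    (f := fun t : ℝ => Real.exp (-t^2)) (μ := volume)
  have hd := integral_Iic_sub_Iic (a := (0:ℝ)) (b := x) hint.integrableOn hint.integrableOn
    (f := fun t : ℝ => Real.exp (-t^2)) (μ := volume)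
  have h2 : (∫ t in Ioi x, Real.exp (-t^2))
      = Real.sqrt Real.pi / 2 - ∫ t in (0:ℝ)..x, Real.exp (-t^2) := by
    rw [← h1]; linarith
  have hπ : Real.sqrt Real.pi ≠ 0 := by
    positivity
  rw [erfc]
  rw [h2, gauss_series, mul_sub]
  congr 1
  field_simp


/-- `W(-z; -1/2, 1) = erfc(z/2)` for all real `z`. -/
theorem wright_neg_half_one (z : ℝ) :
    wrightR (-(1/2)) 1 (-z) = erfc (z / 2) := by
  have hπ : Real.sqrt Real.pi ≠ 0 := by positivity
  set f : ℕ → ℝ := fun k => (-z)^k / ((k.factorial : ℝ) * Real.Gamma (-(1/2) * k + 1)) with hf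
  have heven0 : f 0 = 1 := by
    norm_num [hf, Real.Gamma_one]
  have hevenS : ∀ k : ℕ, k ≠ 0 → f (2*k) = 0 := by
    intro k hk
    obtain ⟨j, rfl⟩ := Nat.exists_eq_succ_of_ne_zero hk
    have harg : -(1/2:ℝ) * ((2*(j+1) : ℕ) : ℝ) + 1 = -(j:ℝ) := by push_cast; ring
    simp only [hf, harg, Real.Gamma_neg_nat_eq_zero, mul_zero, div_zero]
  have hodd : ∀ k : ℕ, f (2*k+1)
      = (-(2/Real.sqrt Real.pi)) * ((-1)^k * (z/2)^(2*k+1) / (k.factorial * (2*k+1))) := by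
    intro k
    have harg : -(1/2:ℝ) * ((2*k+1 : ℕ) : ℝ) + 1 = 1/2 - k := by push_cast; ring
    have h2 : ((2*k+1).factorial : ℝ) = (2*(k:ℝ)+1) * (2*k).factorial := by
      rw [show 2*k+1 = (2*k)+1 from rfl, Nat.factorial_succ]; push_cast; ring
    have h3 : (-z)^(2*k+1) = -z^(2*k+1) := Odd.neg_pow (odd_two_mul_add_one k) z
    have h4 : (z/2)^(2*k+1) = z^(2*k+1)/(2*4^k) := by
      rw [div_pow]
      congr 1
      rw [pow_succ', pow_mul]
      norm_num
    have hfac : (0:ℝ) < (2*k).factorial := Nat.cast_pos.mpr (Nat.factorial_pos _)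
    have hfac2 : (0:ℝ) < k.factorial := Nat.cast_pos.mpr (Nat.factorial_pos _)
    simp only [hf]
    rw [harg, gamma_half_sub, h2, h3, h4]
    rcases Nat.even_or_odd k with hk | hk
    · rw [hk.neg_pow, hk.neg_one_pow]
      field_simp
    · rw [hk.neg_pow, hk.neg_one_pow]
      field_simp
  have hse : Summable fun k => f (2*k) := by
    apply summable_of_ne_finset_zero (s := {0})
    intro k hk
    exact hevenS k (by simpa using hk)
  have hso : Summable fun k => f (2*k+1) := by
    simp_rw [hodd]
    exact (core_summable (z/2)).mul_left _
  have hsplit := tsum_even_add_odd hse hso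
  have he : (∑' k, f (2*k)) = 1 := by
    rw [tsum_eq_single 0 (fun k hk => hevenS k hk)]
    simpa using heven0
  have ho : (∑' k, f (2*k+1))
      = (-(2/Real.sqrt Real.pi)) * ∑' k:ℕ, (-1)^k * (z/2)^(2*k+1) / (k.factorial * (2*k+1)) := by
    simp_rw [hodd]
    exact tsum_mul_left
  rw [wrightR]
  have hrfl : (∑' k : ℕ, (-z)^k / ((k.factorial : ℝ) * Real.Gamma (-(1/2) * k + 1)))
      = ∑' k, f k := rfl
  rw [hrfl, ← hsplit, he, ho, erfc_eq]
  ring
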